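/- Let P be a distribution on 𝒳×𝒴 and let 𝒫(P, f, ℓ_0, u_0) be the set of distributions P̃ such that dP̃_X/dP_X = f and ℓ_0(x) ≤ dP̃_{Y|X}/dP_{Y|X}(y|x) ≤ u_0(x) P-a.s. With w*(x,y) as defined via the conditional quantile threshold q(τ(x);x,P) (with τ(x) = (u_0(x)−1)/(u_0(x)−ℓ_0(x)) and γ_0 chosen so that E[w*(x,Y)|X=x] = f(x)), for every t ∈ ℝ and every P̃ ∈ 𝒫(P, f, ℓ_0, u_0), E[1{V(X,Y)≤t}·w*(X,Y)] ≤ P̃(V(X,Y) ≤ t), with equality achieved by the distribution P* with dP*/dP = w*. -/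

import Mathlib

open MeasureTheory

open ProbabilityTheory

lemma build_kernel {𝒳 𝒴 : Type*} [MeasurableSpace 𝒳] [MeasurableSpace 𝒴]
    (PX : Measure 𝒳) [IsProbabilityMeasure PX]
    (κ : 𝒳 → Measure 𝒴) (hκ : ∀ x, IsProbabilityMeasure (κ x))
    (hF : AEMeasurable (fun x => (κ x).map (fun y => (x, y))) PX) :
    ∃ η : Kernel 𝒳 𝒴, IsMarkovKernel η ∧ (∀ᵐ x ∂PX, η x = κ x) ∧
      PX.bind (fun x => (κ x).map (fun y => (x, y))) = PX ⊗ₘ η := by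
  have hX : Nonempty 𝒳 := PX.nonempty_of_neZero
  set G := hF.mk _ with hG
  have hGmeas : Measurable G := hF.measurable_mk
  have hGae : (fun x => (κ x).map (fun y => (x, y))) =ᵐ[PX] G := hF.ae_eq_mk
  set κ' : 𝒳 → Measure 𝒴 := fun x => (G x).map Prod.snd with hκ'
  have hκ'meas : Measurable κ' := (Measure.measurable_map _ measurable_snd).comp hGmeas
  set ν : Measure 𝒴 := κ (Classical.arbitrary 𝒳) with hν
  set S : Set 𝒳 := {x | κ' x Set.univ = 1} with hS
  have hSmeas : MeasurableSet S :=
    ((Measure.measurable_coe MeasurableSet.univ).comp hκ'meas) (measurableSet_singleton 1)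
  refine ⟨⟨S.piecewise κ' (fun _ => ν), Measurable.piecewise hSmeas hκ'meas measurable_const⟩,
    ?_, ?_, ?_⟩
  · refine ⟨fun x => ?_⟩
    by_cases hx : x ∈ S
    · constructor
      show (S.piecewise κ' (fun _ => ν)) x Set.univ = 1
      rw [Set.piecewise_eq_of_mem _ _ _ hx]; exact hx
    · constructor
      show (S.piecewise κ' (fun _ => ν)) x Set.univ = 1
      rw [Set.piecewise_eq_of_notMem _ _ _ hx]
      exact (hκ _).measure_univ
  · filter_upwards [hGae] with x hx
    have h1 : κ' x = κ x := by
      rw [hκ']; dsimp only; rw [← hx, Measure.map_map measurable_snd measurable_prodMk_left]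
      have : (Prod.snd ∘ fun y : 𝒴 => (x, y)) = id := rfl
      rw [this, Measure.map_id]
    have h2 : x ∈ S := by
      rw [hS]; simp only [Set.mem_setOf_eq, h1]; exact (hκ x).measure_univ
    show (S.piecewise κ' (fun _ => ν)) x = κ x
    rw [Set.piecewise_eq_of_mem _ _ _ h2, h1]
  · set η : Kernel 𝒳 𝒴 := ⟨S.piecewise κ' (fun _ => ν),
      Measurable.piecewise hSmeas hκ'meas measurable_const⟩ with hη
    have hηκ : ∀ᵐ x ∂PX, η x = κ x := by
      filter_upwards [hGae] with x hx
      have h1 : κ' x = κ x := by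
        rw [hκ']; dsimp only; rw [← hx, Measure.map_map measurable_snd measurable_prodMk_left]
        have : (Prod.snd ∘ fun y : 𝒴 => (x, y)) = id := rfl
        rw [this, Measure.map_id]
      have h2 : x ∈ S := by
        rw [hS]; simp only [Set.mem_setOf_eq, h1]; exact (hκ x).measure_univ
      show (S.piecewise κ' (fun _ => ν)) x = κ x
      rw [Set.piecewise_eq_of_mem _ _ _ h2, h1]
    haveI : IsMarkovKernel η := by
      refine ⟨fun x => ?_⟩
      by_cases hx : x ∈ S
      · constructor
        show (S.piecewise κ' (fun _ => ν)) x Set.univ = 1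
        rw [Set.piecewise_eq_of_mem _ _ _ hx]; exact hx
      · constructor
        show (S.piecewise κ' (fun _ => ν)) x Set.univ = 1
        rw [Set.piecewise_eq_of_notMem _ _ _ hx]
        exact (hκ _).measure_univ
    have hF'meas : Measurable (fun x => (η x).map (fun y => (x, y))) := by
      refine Measure.measurable_of_measurable_coe _ fun s hs => ?_
      simp_rw [Measure.map_apply measurable_prodMk_left hs]
      exact Kernel.measurable_kernel_prodMk_left hs
    have hbind : PX.bind (fun x => (κ x).map (fun y => (x, y)))
        = PX.bind (fun x => (η x).map (fun y => (x, y))) := by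
      rw [Measure.bind, Measure.bind]
      congr 1
      refine Measure.map_congr ?_
      filter_upwards [hηκ] with x hx
      rw [hx]
    rw [hbind]
    ext s hs
    rw [Measure.bind_apply hs hF'meas.aemeasurable, Measure.compProd_apply hs]
    exact lintegral_congr fun x => Measure.map_apply measurable_prodMk_left hs


lemma fiber_ineq {𝒴 : Type*} [MeasurableSpace 𝒴] (μ : Measure 𝒴)
    (v : 𝒴 → ℝ) (t qx l γ u : ℝ) (hlγ : l ≤ γ) (hγu : γ ≤ u)
    (w : 𝒴 → ℝ)
    (hwbd : ∀ᵐ y ∂μ, l ≤ w y ∧ w y ≤ u)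
    (hwint : Integrable w μ) (hwmean : ∫ y, w y ∂μ = 1)
    (hsint : Integrable (fun y => if v y < qx then l else if v y = qx then γ else u) μ)
    (hsmean : ∫ y, (if v y < qx then l else if v y = qx then γ else u) ∂μ = 1)
    (hg1 : Integrable (fun y => if v y ≤ t then (if v y < qx then l else if v y = qx then γ else u) else 0) μ)
    (hg2 : Integrable (fun y => if v y ≤ t then w y else 0) μ) :
    ∫ y, (if v y ≤ t then (if v y < qx then l else if v y = qx then γ else u) else 0) ∂μ
      ≤ ∫ y, (if v y ≤ t then w y else 0) ∂μ := by
  by_cases hcase : t < qx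
  · have he : (fun y => if v y ≤ t then (if v y < qx then l else if v y = qx then γ else u) else 0)
        = fun y => if v y ≤ t then l else 0 := by
      funext y; by_cases h : v y ≤ t
      · simp [h, lt_of_le_of_lt h hcase]
      · simp [h]
    rw [he]; rw [he] at hg1
    refine integral_mono_ae hg1 hg2 ?_
    filter_upwards [hwbd] with y hy
    by_cases h : v y ≤ t <;> simp [h, hy.1]
  · push_neg at hcase
    set s := fun y => if v y < qx then l else if v y = qx then γ else u with hs
    have hc1 : Integrable (fun y => if v y ≤ t then (0:ℝ) else s y) μ := by
      have e : (fun y => if v y ≤ t then (0:ℝ) else s y)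
          = fun y => s y - (if v y ≤ t then s y else 0) := by
        funext y; by_cases h : v y ≤ t <;> simp [h]
      rw [e]; exact hsint.sub hg1
    have hc2 : Integrable (fun y => if v y ≤ t then (0:ℝ) else w y) μ := by
      have e : (fun y => if v y ≤ t then (0:ℝ) else w y)
          = fun y => w y - (if v y ≤ t then w y else 0) := by
        funext y; by_cases h : v y ≤ t <;> simp [h]
      rw [e]; exact hwint.sub hg2
    have e1 : ∫ y, (if v y ≤ t then s y else 0) ∂μ
        = 1 - ∫ y, (if v y ≤ t then (0:ℝ) else s y) ∂μ := by
      have e : (fun y => if v y ≤ t then s y else 0)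
          = fun y => s y - (if v y ≤ t then (0:ℝ) else s y) := by
        funext y; by_cases h : v y ≤ t <;> simp [h]
      rw [e, integral_sub hsint hc1, hsmean]
    have e2 : ∫ y, (if v y ≤ t then w y else 0) ∂μ
        = 1 - ∫ y, (if v y ≤ t then (0:ℝ) else w y) ∂μ := by
      have e : (fun y => if v y ≤ t then w y else 0)
          = fun y => w y - (if v y ≤ t then (0:ℝ) else w y) := by
        funext y; by_cases h : v y ≤ t <;> simp [h]
      rw [e, integral_sub hwint hc2, hwmean]
    have hcomp : ∫ y, (if v y ≤ t then (0:ℝ) else w y) ∂μ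
        ≤ ∫ y, (if v y ≤ t then (0:ℝ) else s y) ∂μ := by
      refine integral_mono_ae hc2 hc1 ?_
      filter_upwards [hwbd] with y hy
      by_cases h : v y ≤ t
      · simp [h]
      · have hgt : qx < v y := lt_of_le_of_lt hcase (not_le.mp h)
        have : s y = u := by simp [hs, not_lt.mpr hgt.le, hgt.ne']
        simp [h, this, hy.2]
    rw [e1, e2]; linarith


/-- Proposition 4 of the paper: for every `t`, the worst-case value
`E[1{V(X,Y) ≤ t}·w*(X,Y)]` lower-bounds `P̃(V(X,Y) ≤ t)` for every `P̃` in the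
identification set `𝒫(P, f, ℓ₀, u₀)` (i.e. `dP̃_X/dP_X = f` and
`ℓ₀(x) ≤ dP̃_{Y|X}/dP_{Y|X}(y|x) ≤ u₀(x)` a.s.), with equality achieved by the member of
the identification set whose density with respect to `P` is `w*`. -/
theorem worst_case_cdf_counterfactual
    {𝒳 𝒴 : Type*} [MeasurableSpace 𝒳] [MeasurableSpace 𝒴]
    (PX : Measure 𝒳) [IsProbabilityMeasure PX]
    (κ : 𝒳 → Measure 𝒴) (hκ : ∀ x, IsProbabilityMeasure (κ x))
    (P : Measure (𝒳 × 𝒴))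
    (hP : P = PX.bind (fun x => (κ x).map (fun y => (x, y))))
    (V : 𝒳 → 𝒴 → ℝ)
    (f l0 u0 τ q γ0 : 𝒳 → ℝ)
    (hf : ∀ x, 0 ≤ f x) (hfmean : ∫ x, f x ∂PX = 1)
    (hl : ∀ x, 0 < l0 x ∧ l0 x ≤ 1) (hu : ∀ x, 1 ≤ u0 x) (hlu : ∀ x, l0 x < u0 x)
    (hτ : ∀ x, τ x = (u0 x - 1) / (u0 x - l0 x))
    -- q(x) is the conditional τ(x)-quantile of V(x, Y) under P
    (hq : ∀ x, q x = sInf {z : ℝ | τ x ≤ (κ x {y | V x y ≤ z}).toReal})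
    -- γ₀ is chosen in [ℓ₀, u₀] so that the conditional mean of w*/f is 1
    (hγbd : ∀ x, l0 x ≤ γ0 x ∧ γ0 x ≤ u0 x)
    (hγmean : ∀ᵐ x ∂PX,
      ∫ y, (if V x y < q x then l0 x else if V x y = q x then γ0 x else u0 x) ∂(κ x) = 1)
    (wstar : 𝒳 × 𝒴 → ℝ)
    (hws : ∀ z : 𝒳 × 𝒴, wstar z =
      f z.1 * (if V z.1 z.2 < q z.1 then l0 z.1
               else if V z.1 z.2 = q z.1 then γ0 z.1 else u0 z.1))
    (hwsint : Integrable wstar P)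
    (t : ℝ) :
    (∀ w0 : 𝒳 → 𝒴 → ℝ,
        (∀ᵐ x ∂PX, ∀ᵐ y ∂(κ x), l0 x ≤ w0 x y ∧ w0 x y ≤ u0 x) →
        (∀ᵐ x ∂PX, ∫ y, w0 x y ∂(κ x) = 1) →
        Integrable (fun z : 𝒳 × 𝒴 => f z.1 * w0 z.1 z.2) P →
        ∫ z, (if V z.1 z.2 ≤ t then wstar z else 0) ∂P
          ≤ ∫ z : 𝒳 × 𝒴, (if V z.1 z.2 ≤ t then f z.1 * w0 z.1 z.2 else 0) ∂P) ∧
    (∃ w0 : 𝒳 → 𝒴 → ℝ,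
        (∀ᵐ x ∂PX, ∀ᵐ y ∂(κ x), l0 x ≤ w0 x y ∧ w0 x y ≤ u0 x) ∧
        (∀ᵐ x ∂PX, ∫ y, w0 x y ∂(κ x) = 1) ∧
        ∫ z, (if V z.1 z.2 ≤ t then wstar z else 0) ∂P
          = ∫ z : 𝒳 × 𝒴, (if V z.1 z.2 ≤ t then f z.1 * w0 z.1 z.2 else 0) ∂P) := by
  constructor
  · -- the inequality
    intro w0 hbd hmean hint
    by_cases hF : AEMeasurable (fun x => (κ x).map (fun y => (x, y))) PX
    swap
    · have hP0 : P = 0 := by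
        rw [hP, Measure.bind, Measure.map_of_not_aemeasurable hF, Measure.join_zero]
      rw [hP0]
      simp
    obtain ⟨η, hMarkov, hηκ, hbindeq⟩ := build_kernel PX κ hκ hF
    have hP' : P = PX ⊗ₘ η := by rw [hP, hbindeq]
    rw [hP'] at hwsint hint ⊢
    set g1 : 𝒳 × 𝒴 → ℝ := fun z => if V z.1 z.2 ≤ t then wstar z else 0 with hg1def
    set g2 : 𝒳 × 𝒴 → ℝ := fun z => if V z.1 z.2 ≤ t then f z.1 * w0 z.1 z.2 else 0 with hg2def
    -- positivity of the step and of wstar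
    have hspos : ∀ z : 𝒳 × 𝒴,
        0 < (if V z.1 z.2 < q z.1 then l0 z.1 else if V z.1 z.2 = q z.1 then γ0 z.1 else u0 z.1) := by
      intro z
      split_ifs
      · exact (hl _).1
      · exact lt_of_lt_of_le (hl _).1 (hγbd _).1
      · exact lt_of_lt_of_le zero_lt_one (hu _)
    by_cases hg1 : Integrable g1 (PX ⊗ₘ η)
    · -- main case: show g2 integrable, then Fubini
      have hkey : ∀ z, g2 z = if g1 z ≠ 0 then f z.1 * w0 z.1 z.2 else 0 := by
        intro z
        rcases eq_or_lt_of_le (hf z.1) with h0 | hpos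
        · by_cases hv : V z.1 z.2 ≤ t
          · by_cases hz : g1 z ≠ 0 <;> simp [hg2def, hv, hz, ← h0]
          · have : g1 z = 0 := by simp [hg1def, hv]
            simp [hg2def, hv, this]
        · by_cases hv : V z.1 z.2 ≤ t
          · have : g1 z ≠ 0 := by
              have : 0 < wstar z := by rw [hws]; exact mul_pos hpos (hspos z)
              simp [hg1def, hv]
              exact ne_of_gt this
            simp [hg2def, hv, this]
          · have : g1 z = 0 := by simp [hg1def, hv]
            simp [hg2def, hv, this]
      obtain ⟨g1', hg1'sm, hg1'ae⟩ := hg1.1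
      have hg2 : Integrable g2 (PX ⊗ₘ η) := by
        have hind : (fun z => if g1' z ≠ 0 then f z.1 * w0 z.1 z.2 else 0)
            = Set.indicator {z | g1' z ≠ 0} (fun z : 𝒳 × 𝒴 => f z.1 * w0 z.1 z.2) := by
          funext z; by_cases h : g1' z ≠ 0 <;> simp [Set.indicator, h]
        have hms : MeasurableSet {z | g1' z ≠ 0} := by
          have : {z | g1' z ≠ 0} = (g1' ⁻¹' {0})ᶜ := by ext z; simp
          rw [this]
          exact (hg1'sm.measurable (measurableSet_singleton 0)).compl
        have haesm : AEStronglyMeasurable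
            (fun z => if g1' z ≠ 0 then f z.1 * w0 z.1 z.2 else 0) (PX ⊗ₘ η) := by
          rw [hind]
          exact hint.1.indicator hms
        have hintg : Integrable (fun z => if g1' z ≠ 0 then f z.1 * w0 z.1 z.2 else 0)
            (PX ⊗ₘ η) := by
          refine Integrable.mono' hint.norm haesm ?_
          refine Filter.Eventually.of_forall fun z => ?_
          by_cases h : g1' z ≠ 0 <;> simp [h] <;> positivity
        refine hintg.congr ?_
        filter_upwards [hg1'ae] with z hz
        rw [hkey z, hz]
      have hdiff : Integrable (fun z => g2 z - g1 z) (PX ⊗ₘ η) := hg2.sub hg1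
      have h0 : 0 ≤ ∫ z, (g2 z - g1 z) ∂(PX ⊗ₘ η) := by
        rw [Measure.integral_compProd hdiff]
        refine integral_nonneg_of_ae ?_
        have hg1f := ((Measure.integrable_compProd_iff hg1.1).mp hg1).1
        have hg2f := ((Measure.integrable_compProd_iff hg2.1).mp hg2).1
        filter_upwards [hg1f, hg2f, hηκ, hγmean, hmean, hbd] with x h1 h2 hκx hsm hwm hwb
        show (0:ℝ) ≤ ∫ y, (g2 (x, y) - g1 (x, y)) ∂(η x)
        rw [integral_sub h2 h1, sub_nonneg]
        rw [hκx] at h1 h2 ⊢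
        have e1 : (fun y => g1 (x, y)) = fun y => f x *
            (if V x y ≤ t then (if V x y < q x then l0 x else if V x y = q x then γ0 x else u0 x) else 0) := by
          funext y
          by_cases h : V x y ≤ t <;> simp [hg1def, hws, h]
        have e2 : (fun y => g2 (x, y)) = fun y => f x * (if V x y ≤ t then w0 x y else 0) := by
          funext y
          by_cases h : V x y ≤ t <;> simp [hg2def, h]
        rw [e1] at h1 ⊢
        rw [e2] at h2 ⊢
        rw [integral_const_mul, integral_const_mul]
        rcases eq_or_lt_of_le (hf x) with h0f | hpos
        · rw [← h0f]; simp
        · refine mul_le_mul_of_nonneg_left ?_ hpos.le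
          have hinv : ∀ (A : 𝒴 → ℝ), Integrable (fun y => f x * A y) (κ x) →
              Integrable A (κ x) := by
            intro A hA
            have := hA.const_mul (f x)⁻¹
            have he : (fun y => (f x)⁻¹ * (f x * A y)) = A := by
              funext y; rw [← mul_assoc, inv_mul_cancel₀ hpos.ne', one_mul]
            rwa [he] at this
          have hsint : Integrable
              (fun y => if V x y < q x then l0 x else if V x y = q x then γ0 x else u0 x) (κ x) := by
            by_contra hni
            rw [integral_undef hni] at hsm
            exact one_ne_zero hsm.symm
          have hwint : Integrable (w0 x) (κ x) := by
            by_contra hni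
            rw [integral_undef hni] at hwm
            exact one_ne_zero hwm.symm
          exact fiber_ineq (κ x) (V x) t (q x) (l0 x) (γ0 x) (u0 x) (hγbd x).1 (hγbd x).2
            (w0 x) hwb hwint hwm hsint hsm (hinv _ h1) (hinv _ h2)
      have hsub := integral_sub hg2 hg1
      rw [hsub] at h0
      linarith
    · rw [integral_undef hg1]
      by_cases hg2 : Integrable g2 (PX ⊗ₘ η)
      · rw [Measure.integral_compProd hg2]
        refine integral_nonneg_of_ae ?_
        have hg2f := ((Measure.integrable_compProd_iff hg2.1).mp hg2).1
        filter_upwards [hg2f, hηκ, hbd] with x hif hκx hwb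
        rw [hκx]
        refine integral_nonneg_of_ae ?_
        filter_upwards [hwb] with y hy
        by_cases h : V x y ≤ t
        · simp only [hg2def, h, if_true]
          exact mul_nonneg (hf x) (le_trans (hl x).1.le hy.1)
        · simp [hg2def, h]
      · rw [integral_undef hg2]
  · -- equality achieved by the step weight
    refine ⟨fun x y => if V x y < q x then l0 x else if V x y = q x then γ0 x else u0 x,
      ?_, hγmean, ?_⟩
    · refine Filter.Eventually.of_forall fun x => Filter.Eventually.of_forall fun y => ?_
      dsimp only
      split_ifs
      · exact ⟨le_refl _, le_trans (hl x).2 (hu x)⟩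
      · exact ⟨(hγbd x).1, (hγbd x).2⟩
      · exact ⟨(hlu x).le, le_refl _⟩
    · have : (fun z : 𝒳 × 𝒴 => if V z.1 z.2 ≤ t then wstar z else 0)
          = fun z : 𝒳 × 𝒴 => if V z.1 z.2 ≤ t then
              f z.1 * (if V z.1 z.2 < q z.1 then l0 z.1
                else if V z.1 z.2 = q z.1 then γ0 z.1 else u0 z.1) else 0 := by
        funext z; rw [hws]
      rw [this]
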